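/- Let w be a word of length n ≥ 1 over Σ that is not self-minimal, let z be the maximal letter of Σ, and let w' be the lexicographically greatest self-minimal word of length n with w' ≤ w (which exists, since the constant word consisting of n copies of the minimal letter of Σ is self-minimal and ≤ w). Then there exists an index k with 1 ≤ k ≤ n such that w[k] is not the minimal letter of Σ and w' = w_(k-1)·b'·z^(n-k), where b' is the greatest letter of Σ that is smaller than w[k]. -/

import Mathlib

namespace Lyndon

variable {α : Type*}

/-- `rot w c` is the cyclic rotation of `w` obtained by moving its first `c mod |w|`
letters to the end. -/
def rot (w : List α) (c : ℕ) : List α :=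
  w.drop (c % w.length) ++ w.take (c % w.length)

/-- `power w k` is the concatenation of `k` copies of `w`. -/
def power (w : List α) (k : ℕ) : List α := (List.replicate k w).flatten

/-- `minrot w` is the lexicographically minimal cyclic rotation of `w`. -/
def minrot [LinearOrder α] (w : List α) : List α :=
  ((List.range w.length).map (rot w)).foldr min w

/-- A word is self-minimal if it equals its minimal cyclic rotation. -/
def SelfMinimal [LinearOrder α] (w : List α) : Prop := minrot w = w

/-- A word is primitive if it is a `k`-th power (for a positive integer `k`)
only of itself. -/
def Primitive (w : List α) : Prop :=
  ∀ (u : List α) (k : ℕ), 0 < k → w = power u k → u = w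

/-- A Lyndon word is a nonempty word that is primitive and self-minimal. -/
def IsLyndon [LinearOrder α] (w : List α) : Prop :=
  w ≠ [] ∧ Primitive w ∧ SelfMinimal w

/-- `Pref₋(w)`: the words `w_(i)·s` for `0 ≤ i ≤ n-1` and a letter `s < w[i+1]`,
together with `w` itself. -/
def PrefMinus [LinearOrder α] (w : List α) : Set (List α) :=
  {y | (∃ i : Fin w.length, ∃ s : α, s < w.get i ∧ y = w.take i ++ [s]) ∨ y = w}

/-- `L(w)`: the words containing a factor (contiguous subword) from `Pref₋(w)`. -/
def InL [LinearOrder α] (w x : List α) : Prop :=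
  ∃ y ∈ PrefMinus w, y <:+: x

section Aux

variable [LinearOrder α]

theorem cons_lt_cons_iff' {a b : α} {x y : List α} :
    (a :: x) < (b :: y) ↔ a < b ∨ (a = b ∧ x < y) := by
  constructor
  · intro h
    have h' : List.Lex (· < ·) (a :: x) (b :: y) := h
    cases h' with
    | cons h => exact Or.inr ⟨rfl, h⟩
    | rel h => exact Or.inl h
  · rintro (h | ⟨rfl, h⟩)
    · exact List.Lex.rel h
    · exact List.Lex.cons h

theorem lt_iff_firstdiff (a₀ : α) :
    ∀ (x y : List α), x.length = y.length →
      (x < y ↔ ∃ j, j < y.length ∧ (∀ s, s < j → x.getD s a₀ = y.getD s a₀) ∧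
        x.getD j a₀ < y.getD j a₀)
  | [], [], _ => by
      constructor
      · intro h; exact absurd h (lt_irrefl _)
      · rintro ⟨j, hj, _⟩; simp at hj
  | [], b :: y, h => by simp at h
  | a :: x, [], h => by simp at h
  | a :: x, b :: y, h => by
      have hlen : x.length = y.length := by simpa using h
      rw [cons_lt_cons_iff', lt_iff_firstdiff a₀ x y hlen]
      constructor
      · rintro (hab | ⟨rfl, j, hj, hpre, hlt⟩)
        · exact ⟨0, by simp, by simp, by simpa using hab⟩
        · refine ⟨j + 1, by simpa using Nat.succ_lt_succ hj, ?_, by simpa using hlt⟩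
          intro s hs
          cases s with
          | zero => simp
          | succ s => simpa using hpre s (by omega)
      · rintro ⟨j, hj, hpre, hlt⟩
        cases j with
        | zero => exact Or.inl (by simpa using hlt)
        | succ j =>
          have hab : a = b := by simpa using hpre 0 (by omega)
          exact Or.inr ⟨hab, j, by simpa using hj,
            fun s hs => by simpa using hpre (s + 1) (by omega), by simpa using hlt⟩

theorem le_of_pointwise (a₀ : α) {x y : List α} (h : x.length = y.length)
    (hp : ∀ j, j < x.length → x.getD j a₀ ≤ y.getD j a₀) : x ≤ y := by
  by_contra hlt
  rw [not_le] at hlt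
  rcases (lt_iff_firstdiff a₀ y x h.symm).mp hlt with ⟨j, hj, _, hjlt⟩
  exact absurd hjlt (not_lt.mpr (hp j hj))

theorem rot_length (w : List α) (i : ℕ) : (rot w i).length = w.length := by
  simp only [rot, List.length_append, List.length_drop, List.length_take]
  omega

theorem getD_rot (a₀ : α) (w : List α) {i t : ℕ} (hi : i < w.length) (ht : t < w.length) :
    (rot w i).getD t a₀ = w.getD ((i + t) % w.length) a₀ := by
  have hm : i % w.length = i := Nat.mod_eq_of_lt hi
  rw [rot, hm]
  have hdl : (w.drop i).length = w.length - i := List.length_drop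
  rcases Nat.lt_or_ge t (w.length - i) with h | h
  · have h1 : t < (w.drop i).length := by omega
    rw [List.getD_append _ _ _ _ h1, List.getD_eq_getElem _ _ h1,
      List.getD_eq_getElem _ _ (Nat.lt_of_lt_of_le (Nat.mod_lt _ (by omega)) le_rfl)]
    have hmm : (i + t) % w.length = i + t := Nat.mod_eq_of_lt (by omega)
    simp only [List.getElem_drop]
    congr 1
    omega
  · have h1 : (w.drop i).length ≤ t := by omega
    rw [List.getD_append_right _ _ _ _ h1]
    have h2 : t - (w.drop i).length < (w.take i).length := by
      rw [List.length_take]; omega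
    rw [List.getD_eq_getElem _ _ h2, List.getD_eq_getElem _ _ (Nat.mod_lt _ (by omega))]
    simp only [List.getElem_take]
    congr 1
    rw [Nat.mod_eq_sub_mod (by omega), Nat.mod_eq_of_lt (by omega)]
    omega

theorem foldr_min_le {β : Type*} [LinearOrder β] (l : List β) (b : β) : l.foldr min b ≤ b := by
  induction l with
  | nil => exact le_rfl
  | cons a l ih => exact le_trans (min_le_right a _) ih

theorem foldr_min_eq_self {β : Type*} [LinearOrder β] {l : List β} {b : β} :
    l.foldr min b = b ↔ ∀ x ∈ l, b ≤ x := by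
  induction l with
  | nil => simp
  | cons a l ih =>
    simp only [List.foldr_cons, List.mem_cons]
    constructor
    · intro h
      have h1 : b ≤ a := by
        have h' := min_le_left a (l.foldr min b)
        rwa [h] at h'
      have h2 : l.foldr min b = b := by
        have h' := min_le_right a (l.foldr min b)
        rw [h] at h'
        exact le_antisymm (foldr_min_le l b) h'
      rintro x (rfl | hx)
      · exact h1
      · exact (ih.mp h2) x hx
    · intro hAll
      have h2 : l.foldr min b = b := ih.mpr fun x hx => hAll x (Or.inr hx)
      rw [h2]
      exact min_eq_right (hAll a (Or.inl rfl))

theorem selfMinimal_iff {w : List α} :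
    SelfMinimal w ↔ ∀ i, i < w.length → w ≤ rot w i := by
  unfold SelfMinimal minrot
  rw [foldr_min_eq_self]
  constructor
  · intro H i hi
    exact H (rot w i) (List.mem_map.mpr ⟨i, List.mem_range.mpr hi, rfl⟩)
  · rintro H x hx
    rcases List.mem_map.mp hx with ⟨i, hi, rfl⟩
    exact H i (List.mem_range.mp hi)

theorem selfMinimal_iff_fun (a₀ : α) {w : List α} (hw : 0 < w.length) :
    SelfMinimal w ↔ ∀ i t, i < w.length → t < w.length →
      (∀ s, s < t → w.getD ((i + s) % w.length) a₀ = w.getD s a₀) →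
      w.getD t a₀ ≤ w.getD ((i + t) % w.length) a₀ := by
  rw [selfMinimal_iff]
  constructor
  · intro H i t hi ht hpre
    by_contra hc
    rw [not_le] at hc
    have hlt : rot w i < w := by
      rw [lt_iff_firstdiff a₀ _ _ (rot_length w i)]
      exact ⟨t, ht, fun s hs => (getD_rot a₀ w hi (lt_trans hs ht)).trans (hpre s hs),
        by rwa [getD_rot a₀ w hi ht]⟩
    exact absurd hlt (not_lt.mpr (H i hi))
  · intro H i hi
    rw [← not_lt, lt_iff_firstdiff a₀ _ _ (rot_length w i)]
    rintro ⟨j, hj, hpre, hlt⟩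
    rw [getD_rot a₀ w hi hj] at hlt
    refine absurd (H i j hi hj fun s hs => ?_) (not_le.mpr hlt)
    rw [← getD_rot a₀ w hi (lt_trans hs hj)]
    exact hpre s hs

theorem sm_preserve {n d : ℕ} (hd : d < n) (z c : α) (hz : ∀ a : α, a ≤ z)
    (f g : ℕ → α) (hc : f d ≤ c)
    (hg : ∀ k, k < n → g k = if k < d then f k else if k = d then c else z)
    (hSM : ∀ i t, i < n → t < n →
      (∀ s, s < t → f ((i + s) % n) = f s) → f t ≤ f ((i + t) % n))
    (i t : ℕ) (hi : i < n) (ht : t < n)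
    (E : ∀ s, s < t → g ((i + s) % n) = g s) : g t ≤ g ((i + t) % n) := by
  have hn : 0 < n := lt_of_le_of_lt (Nat.zero_le d) hd
  have hgf : ∀ r, r < n → f r ≤ g r := by
    intro r hr
    rw [hg r hr]
    split_ifs with h1 h2
    · exact le_rfl
    · exact h2 ▸ hc
    · exact hz _
  have hgz : ∀ r, r < n → g r ≤ z := by
    intro r hr
    rw [hg r hr]
    split_ifs with h1 h2
    · exact hz _
    · exact hz _
    · exact le_rfl
  have hf0 : ∀ r, r < n → f 0 ≤ f r := by
    intro r hr
    have := hSM r 0 hr hn (fun s hs => absurd hs (Nat.not_lt_zero s))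
    simpa [Nat.mod_eq_of_lt hr] using this
  rcases eq_or_lt_of_le (hz (f 0)) with hf0z | hf0z
  · have hfz : ∀ r, r < n → f r = z := fun r hr =>
      le_antisymm (hz _) (hf0z ▸ hf0 r hr)
    have hcz : c = z := le_antisymm (hz _) (by rw [← hfz d hd]; exact hc)
    have hgzz : ∀ r, r < n → g r = z := by
      intro r hr
      rw [hg r hr]
      split_ifs with h1 h2
      · exact hfz r hr
      · exact hcz
      · rfl
    rw [hgzz t ht, hgzz _ (Nat.mod_lt _ hn)]
  rcases Nat.eq_zero_or_pos i with rfl | hipos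
  · rw [Nat.zero_add, Nat.mod_eq_of_lt ht]
  by_cases hid : d < i
  · rcases Nat.eq_zero_or_pos t with rfl | htpos
    · have hP : g ((i + 0) % n) = z := by
        rw [Nat.add_zero, Nat.mod_eq_of_lt hi, hg i hi, if_neg (by omega), if_neg (by omega)]
      rw [hP]
      exact hgz 0 hn
    · have e0 := E 0 htpos
      rw [Nat.add_zero, Nat.mod_eq_of_lt hi] at e0
      have hgi : g i = z := by
        rw [hg i hi, if_neg (by omega), if_neg (by omega)]
      have hg0z : g 0 = z := by rw [← e0, hgi]
      rcases Nat.eq_zero_or_pos d with rfl | hdpos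
      · have hcz : c = z := by
          rw [hg 0 hn, if_neg (by omega), if_pos rfl] at hg0z
          exact hg0z
        have hgzz : ∀ r, r < n → g r = z := by
          intro r hr
          rw [hg r hr]
          split_ifs with h1 h2
          · omega
          · exact hcz
          · rfl
        rw [hgzz t ht, hgzz _ (Nat.mod_lt _ hn)]
      · exfalso
        rw [hg 0 hn, if_pos hdpos] at hg0z
        exact absurd hg0z (ne_of_lt hf0z)
  push_neg at hid
  have C : ∀ s, s ≤ t → (g s = f s ∧ (s < t → f ((i + s) % n) = f s)) := by
    intro s
    induction s using Nat.strong_induction_on with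
    | _ s IH =>
      intro hst
      have hsn : s < n := Nat.lt_of_le_of_lt hst ht
      have partA : g s = f s := by
        by_cases hsd : s < d
        · rw [hg s hsn, if_pos hsd]
        · have hsi : i ≤ s := le_trans hid (by omega)
          have h1 : s - i < s := by omega
          have h3 : s - i < t := by omega
          obtain ⟨hA', hB'⟩ := IH (s - i) h1 (by omega)
          have hB'' := hB' h3
          have hmod : (i + (s - i)) % n = s := by
            rw [Nat.add_sub_cancel' hsi]
            exact Nat.mod_eq_of_lt hsn
          have e := E (s - i) h3
          rw [hmod] at e hB''
          rw [e, hA', hB'']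
      refine ⟨partA, fun hst' => ?_⟩
      have hq : (i + s) % n < n := Nat.mod_lt _ hn
      have hfle : f s ≤ f ((i + s) % n) :=
        hSM i s hi hsn fun s' hs' =>
          (IH s' hs' (le_of_lt (lt_trans hs' hst'))).2 (lt_trans hs' hst')
      have hge : f ((i + s) % n) ≤ f s := by
        calc f ((i + s) % n) ≤ g ((i + s) % n) := hgf _ hq
          _ = g s := E s hst'
          _ = f s := partA
      exact le_antisymm hge hfle
  obtain ⟨hAt, _⟩ := C t le_rfl
  have hfle : f t ≤ f ((i + t) % n) :=
    hSM i t hi ht fun s hs => (C s (le_of_lt hs)).2 hs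
  rw [hAt]
  exact le_trans hfle (hgf _ (Nat.mod_lt _ hn))

theorem build_sm (a₀ : α) {w' : List α} {n d : ℕ} (hw'len : w'.length = n) (hdn : d < n)
    (hw'sm : SelfMinimal w') {z c : α} (hz : ∀ a : α, a ≤ z) (hc : w'.getD d a₀ ≤ c) :
    (w'.take d ++ c :: List.replicate (n - (d + 1)) z).length = n ∧
    SelfMinimal (w'.take d ++ c :: List.replicate (n - (d + 1)) z) ∧
    ∀ k, k < n → (w'.take d ++ c :: List.replicate (n - (d + 1)) z).getD k a₀ =
      (if k < d then w'.getD k a₀ else if k = d then c else z) := by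
  set u := w'.take d ++ c :: List.replicate (n - (d + 1)) z with hu
  have hplen : (w'.take d).length = d := by
    rw [List.length_take, hw'len]; omega
  have hulen : u.length = n := by
    rw [hu, List.length_append, hplen, List.length_cons, List.length_replicate]; omega
  have hdesc : ∀ k, k < n →
      u.getD k a₀ = (if k < d then w'.getD k a₀ else if k = d then c else z) := by
    intro k hk
    by_cases h1 : k < d
    · rw [if_pos h1, hu, List.getD_append _ _ _ _ (by omega),
        List.getD_eq_getElem _ _ (by omega),
        List.getD_eq_getElem _ _ (by omega : k < w'.length)]
      exact List.getElem_take
    · rw [if_neg h1, hu, List.getD_append_right _ _ _ _ (by omega), hplen]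
      by_cases h2 : k = d
      · rw [if_pos h2, h2, Nat.sub_self]
        rfl
      · rw [if_neg h2]
        have h3 : k - d = (k - d - 1) + 1 := by omega
        rw [h3, List.getD_cons_succ,
          List.getD_eq_getElem _ _ (by rw [List.length_replicate]; omega)]
        exact List.getElem_replicate _
  refine ⟨hulen, ?_, hdesc⟩
  have hSMf : ∀ i t, i < n → t < n →
      (∀ s, s < t → w'.getD ((i + s) % n) a₀ = w'.getD s a₀) →
      w'.getD t a₀ ≤ w'.getD ((i + t) % n) a₀ := by
    have h := (selfMinimal_iff_fun a₀ (by rw [hw'len]; omega)).mp hw'sm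
    simpa only [hw'len] using h
  rw [selfMinimal_iff_fun a₀ (by rw [hulen]; omega)]
  simp only [hulen]
  intro i t hi ht E
  exact sm_preserve hdn z c hz (fun k => w'.getD k a₀) (fun k => u.getD k a₀)
    hc hdesc hSMf i t hi ht E

end Aux

/-- If `w` of length `n ≥ 1` is not self-minimal, `z` is the maximal letter, and `w'`
is the lexicographically greatest self-minimal word of length `n` with `w' ≤ w`, then
`w' = w_(k-1)·b'·z^(n-k)` for some `1 ≤ k ≤ n` such that `w[k]` is not the minimal
letter, where `b'` is the greatest letter smaller than `w[k]`. -/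
theorem stmt_2 [LinearOrder α] [Fintype α] [Nonempty α]
    (w w' : List α) (n : ℕ) (hn : 1 ≤ n) (hw : w.length = n)
    (hnotsm : ¬ SelfMinimal w)
    (z : α) (hz : ∀ a : α, a ≤ z)
    (hw'len : w'.length = n) (hw'sm : SelfMinimal w') (hw'le : w' ≤ w)
    (hw'max : ∀ u : List α, u.length = n → SelfMinimal u → u ≤ w → u ≤ w') :
    ∃ k, 1 ≤ k ∧ k ≤ n ∧ ∃ (hk : k - 1 < w.length),
      (∃ a : α, a < w.get ⟨k - 1, hk⟩) ∧
      ∃ b' : α, b' < w.get ⟨k - 1, hk⟩ ∧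
        (∀ a : α, a < w.get ⟨k - 1, hk⟩ → a ≤ b') ∧
        w' = w.take (k - 1) ++ [b'] ++ List.replicate (n - k) z := by
  obtain ⟨a₀⟩ := ‹Nonempty α›
  have hne : w' ≠ w := by rintro rfl; exact hnotsm hw'sm
  have hlen : w'.length = w.length := by rw [hw'len, hw]
  have hlt : w' < w := lt_of_le_of_ne hw'le hne
  obtain ⟨d, hd, hpre, hdlt⟩ := (lt_iff_firstdiff a₀ w' w hlen).mp hlt
  have hdn : d < n := hw ▸ hd
  have htakeq : w'.take d = w.take d := by
    apply List.ext_getElem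
    · rw [List.length_take, List.length_take, hlen]
    · intro i h1 h2
      rw [List.length_take] at h1
      have hid : i < d := by omega
      have h := hpre i hid
      rw [List.getD_eq_getElem _ _ (by omega : i < w'.length),
        List.getD_eq_getElem _ _ (by rw [hw]; omega : i < w.length)] at h
      simpa using h
  have hbuild : ∀ c : α, w'.getD d a₀ ≤ c →
      (w.take d ++ c :: List.replicate (n - (d + 1)) z).length = n ∧
      SelfMinimal (w.take d ++ c :: List.replicate (n - (d + 1)) z) ∧
      ∀ k, k < n → (w.take d ++ c :: List.replicate (n - (d + 1)) z).getD k a₀ =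
        (if k < d then w'.getD k a₀ else if k = d then c else z) := by
    intro c hcge
    have h := build_sm a₀ hw'len hdn hw'sm hz hcge
    rwa [htakeq] at h
  have hltw : ∀ c : α, (hcge : w'.getD d a₀ ≤ c) → c < w.getD d a₀ →
      (w.take d ++ c :: List.replicate (n - (d + 1)) z) < w := by
    intro c hcge hclt
    obtain ⟨hulen, _, hdesc⟩ := hbuild c hcge
    rw [lt_iff_firstdiff a₀ _ _ (by rw [hulen, hw])]
    refine ⟨d, hd, ?_, ?_⟩
    · intro s hs
      rw [hdesc s (by omega), if_pos hs]
      exact hpre s hs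
    · rw [hdesc d hdn, if_neg (by omega), if_pos rfl]
      exact hclt
  have hk : d + 1 - 1 < w.length := hd
  have hgw : w.get ⟨d + 1 - 1, hk⟩ = w.getD d a₀ := by
    rw [List.get_eq_getElem]
    exact (List.getD_eq_getElem _ _ hd).symm
  refine ⟨d + 1, by omega, by omega, hk, ⟨w'.getD d a₀, by rw [hgw]; exact hdlt⟩,
    w'.getD d a₀, by rw [hgw]; exact hdlt, ?_, ?_⟩
  · intro a ha
    rw [hgw] at ha
    by_contra hab
    rw [not_le] at hab
    obtain ⟨hulen, husm, hdesc⟩ := hbuild a (le_of_lt hab)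
    have hule : (w.take d ++ a :: List.replicate (n - (d + 1)) z) ≤ w :=
      le_of_lt (hltw a (le_of_lt hab) ha)
    have h1 := hw'max _ hulen husm hule
    have h2 : w' < w.take d ++ a :: List.replicate (n - (d + 1)) z := by
      rw [lt_iff_firstdiff a₀ _ _ (by rw [hulen, hw'len])]
      refine ⟨d, by rw [hulen]; exact hdn, ?_, ?_⟩
      · intro s hs
        rw [hdesc s (by omega), if_pos hs]
      · rw [hdesc d hdn, if_neg (by omega), if_pos rfl]
        exact hab
    exact absurd h1 (not_le.mpr h2)
  · obtain ⟨hulen, husm, hdesc⟩ := hbuild (w'.getD d a₀) le_rfl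
    have hule := le_of_lt (hltw _ le_rfl hdlt)
    have h1 := hw'max _ hulen husm hule
    have h2 : w' ≤ w.take d ++ (w'.getD d a₀) :: List.replicate (n - (d + 1)) z := by
      apply le_of_pointwise a₀ (by rw [hw'len, hulen])
      intro j hj
      rw [hw'len] at hj
      rw [hdesc j hj]
      by_cases hj1 : j < d
      · rw [if_pos hj1]
      · by_cases hj2 : j = d
        · rw [if_neg hj1, if_pos hj2, hj2]
        · rw [if_neg hj1, if_neg hj2]
          exact hz _
    have heq := le_antisymm h2 h1
    conv_lhs => rw [heq]
    rw [Nat.add_sub_cancel, List.append_assoc, List.singleton_append]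


end Lyndon
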